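/- Let G be an undirected graph with connected components C₁,...,Cm, and let E⁺ be a set of additional undirected edges. Define the quotient graph H whose nodes are the components Cᵢ containing an endpoint of some edge in E⁺, with an edge between Cᵢ and Cⱼ (i ≠ j) whenever some edge of E⁺ has one endpoint in Cᵢ and the other in Cⱼ. Then for any two nodes u, v of G: u and v are connected in G + E⁺ (the graph with edge set E ∪ E⁺) if and only if u and v are connected in G, or the components of u and v in G both contain endpoints of E⁺-edges and they are connected in H. -/

import Mathlib

variable {V : Type*}

/-- `u`'s component contains an endpoint of an `Ep`-edge. -/
def Touched (E Ep : V → V → Prop) (u : V) : Prop :=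
  ∃ x, Relation.EqvGen E u x ∧ ∃ y, Ep x y ∨ Ep y x

/-- Connectivity in the quotient graph `H` whose nodes are the components of
`G` containing endpoints of `Ep`-edges, lifted to representatives: one step
either stays inside a component or follows an `Ep`-edge between components. -/
def ConnH (E Ep : V → V → Prop) (u v : V) : Prop :=
  Relation.ReflTransGen
    (fun a b => Relation.EqvGen E a b ∨
      ∃ x y, Ep x y ∧ Relation.EqvGen E a x ∧ Relation.EqvGen E b y) u v

private lemma touched_of_eqv {E Ep : V → V → Prop} {u v : V}
    (h : Relation.EqvGen E u v) (ht : Touched E Ep v) : Touched E Ep u := by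
  obtain ⟨x, hx, hy⟩ := ht
  exact ⟨x, Relation.EqvGen.trans _ _ _ h hx, hy⟩

theorem stmt17 (E Ep : V → V → Prop)
    (hE : ∀ u v, E u v → E v u) (hEp : ∀ u v, Ep u v → Ep v u) :
    ∀ u v : V,
      Relation.EqvGen (fun a b => E a b ∨ Ep a b) u v ↔
        (Relation.EqvGen E u v ∨
          (Touched E Ep u ∧ Touched E Ep v ∧ ConnH E Ep u v)) := by
  set R : V → V → Prop := fun a b => Relation.EqvGen E a b ∨
      ∃ x y, Ep x y ∧ Relation.EqvGen E a x ∧ Relation.EqvGen E b y with hR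
  have hRsymm : Symmetric R := by
    intro a b hab
    rcases hab with h | ⟨x, y, hxy, hax, hby⟩
    · exact Or.inl (Relation.EqvGen.symm _ _ h)
    · exact Or.inr ⟨y, x, hEp _ _ hxy, hby, hax⟩
  have hConnHsymm : ∀ {a b}, ConnH E Ep a b → ConnH E Ep b a := by
    intro a b h
    exact (@Relation.ReflTransGen.stdSymm _ R ⟨fun a b h => hRsymm h⟩).symm _ _ h
  intro u v
  constructor
  · intro h
    induction h with
    | rel a b hab =>
      rcases hab with h | h
      · exact Or.inl (Relation.EqvGen.rel _ _ h)
      · refine Or.inr ⟨⟨a, Relation.EqvGen.refl a, b, Or.inl h⟩,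
          ⟨b, Relation.EqvGen.refl b, a, Or.inr h⟩, ?_⟩
        exact Relation.ReflTransGen.single
          (Or.inr ⟨a, b, h, Relation.EqvGen.refl a, Relation.EqvGen.refl b⟩)
    | refl a => exact Or.inl (Relation.EqvGen.refl a)
    | symm a b _ ih =>
      rcases ih with h | ⟨ha, hb, hc⟩
      · exact Or.inl (Relation.EqvGen.symm _ _ h)
      · exact Or.inr ⟨hb, ha, hConnHsymm hc⟩
    | trans a b c _ _ ih1 ih2 =>
      rcases ih1 with h1 | ⟨ha, hb, hab⟩
      · rcases ih2 with h2 | ⟨hb, hc, hbc⟩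
        · exact Or.inl (Relation.EqvGen.trans _ _ _ h1 h2)
        · exact Or.inr ⟨touched_of_eqv h1 hb, hc,
            Relation.ReflTransGen.head (Or.inl h1) hbc⟩
      · rcases ih2 with h2 | ⟨hb', hc, hbc⟩
        · exact Or.inr ⟨ha, touched_of_eqv (Relation.EqvGen.symm _ _ h2) hb,
            Relation.ReflTransGen.tail hab (Or.inl h2)⟩
        · exact Or.inr ⟨ha, hc, Relation.ReflTransGen.trans hab hbc⟩
  · intro h
    have mono : ∀ {a b : V}, Relation.EqvGen E a b →
        Relation.EqvGen (fun a b => E a b ∨ Ep a b) a b := by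
      intro a b hab
      exact Relation.EqvGen.mono (fun x y h => Or.inl h) _ _ hab
    rcases h with h | ⟨ht1, ht2, hc⟩
    · exact mono h
    · clear ht1 ht2
      induction hc with
      | refl => exact Relation.EqvGen.refl u
      | tail hab hstep ih =>
        refine Relation.EqvGen.trans _ _ _ ih ?_
        rcases hstep with h | ⟨x, y, hxy, hax, hby⟩
        · exact mono h
        · exact Relation.EqvGen.trans _ _ _ (mono hax)
            (Relation.EqvGen.trans _ _ _
              (Relation.EqvGen.rel _ _ (Or.inr hxy))
              (Relation.EqvGen.symm _ _ (mono hby)))
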